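/- arXiv:0907.1552 — 3 statements merged into one kernel-verified Lean document; each statement's English description precedes it below -/
import Mathlib

section
/- Let 0 < α < π/3 and l > 0, let T = T(α) be the subequilateral triangle, and set h = l·cos(α/2) (the width of T). Define w : ℝ² → ℝ by w(x, y) = J₀(j_{1,1}·x/h). Then ∫_T w dA = 0, ∫_T w² dA > 0, and ∫_T ‖∇w‖² dA = (j_{1,1}/h)²·∫_T w² dA. (Consequently the first nonzero Neumann eigenvalue satisfies μ₁(α)·D² ≤ j_{1,1}²/cos²(α/2), where D = l is the diameter.) -/
open MeasureTheory Real

noncomputable section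

/-- The Euclidean plane. -/
abbrev E2 := EuclideanSpace ℝ (Fin 2)

/-- The point (a, b) in the Euclidean plane. -/
def pt (a b : ℝ) : E2 := WithLp.toLp 2 ![a, b]

/-- The Bessel function `J_n(x) = (1/π)·∫₀^π cos(nθ − x·sin θ) dθ`. -/
def besselJ (n : ℕ) (x : ℝ) : ℝ :=
  (1 / π) * ∫ θ in (0:ℝ)..π, Real.cos (n * θ - x * Real.sin θ)

/-- The isosceles triangle `T(α)` with aperture `α` at the origin and
two equal sides of length `l`, symmetric about the x-axis. -/
def Tri (α l : ℝ) : Set E2 :=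
  convexHull ℝ {pt 0 0, pt (l * Real.cos (α/2)) (l * Real.sin (α/2)),
    pt (l * Real.cos (α/2)) (-(l * Real.sin (α/2)))}

/-! ### Derivative of `besselJ` -/

lemma besselJ_hasDerivAt (n : ℕ) (x : ℝ) :
    HasDerivAt (besselJ n)
      ((1 / π) * ∫ θ in (0:ℝ)..π, Real.sin θ * Real.sin (n * θ - x * Real.sin θ)) x := by
  have key := intervalIntegral.hasDerivAt_integral_of_dominated_loc_of_deriv_le
      (F := fun x θ => Real.cos (n * θ - x * Real.sin θ))
      (F' := fun x θ => Real.sin θ * Real.sin (n * θ - x * Real.sin θ))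
      (x₀ := x) (bound := fun _ => 1) (a := 0) (b := π) (s := Metric.ball x 1) (μ := volume)
      (Metric.ball_mem_nhds x one_pos) ?_ ?_ ?_ ?_ ?_ ?_
  · exact (key.2.const_mul (1 / π)).congr_deriv rfl
  · filter_upwards with y
    exact (Continuous.aestronglyMeasurable (by continuity)).restrict
  · exact (Continuous.intervalIntegrable (by continuity)) 0 π
  · exact (Continuous.aestronglyMeasurable (by continuity)).restrict
  · filter_upwards with θ _ y _
    calc ‖Real.sin θ * Real.sin (n * θ - y * Real.sin θ)‖
        = |Real.sin θ| * |Real.sin (n * θ - y * Real.sin θ)| := abs_mul _ _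
      _ ≤ 1 * 1 := by
          gcongr <;> exact abs_sin_le_one _
      _ = 1 := one_mul 1
  · exact intervalIntegrable_const
  · filter_upwards with θ _ y _
    have h1 : HasDerivAt (fun z : ℝ => (n:ℝ) * θ - z * Real.sin θ) (-Real.sin θ) y := by
      simpa using ((hasDerivAt_mul_const (Real.sin θ)).const_sub ((n:ℝ) * θ))
    have := (Real.hasDerivAt_cos ((n:ℝ) * θ - y * Real.sin θ)).comp y h1
    refine this.congr_deriv ?_
    ring

lemma besselJ_continuous (n : ℕ) : Continuous (besselJ n) :=
  continuous_iff_continuousAt.2 fun x => (besselJ_hasDerivAt n x).continuousAt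

/-! ### Two exact θ-integrals -/

lemma besselJ_aux1 (x : ℝ) : ∫ θ in (0:ℝ)..π, Real.cos θ * Real.cos (x * Real.sin θ) = 0 := by
  rcases eq_or_ne x 0 with hx | hx
  · simp [hx]
  · have key : ∀ t ∈ Set.uIcc (0:ℝ) π,
        HasDerivAt (fun θ => Real.sin (x * Real.sin θ) / x)
          (Real.cos t * Real.cos (x * Real.sin t)) t := by
      intro t _
      have h1 : HasDerivAt (fun θ : ℝ => x * Real.sin θ) (x * Real.cos t) t :=
        (Real.hasDerivAt_sin t).const_mul x
      have h2 := ((Real.hasDerivAt_sin (x * Real.sin t)).comp t h1).div_const x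
      refine h2.congr_deriv ?_
      field_simp
    have := intervalIntegral.integral_eq_sub_of_hasDerivAt key
      ((Continuous.intervalIntegrable (by continuity)) 0 π)
    simp at this
    simpa using this

lemma besselJ_aux2 (x : ℝ) :
    ∫ θ in (0:ℝ)..π, (1 - x * Real.cos θ) * Real.cos (θ - x * Real.sin θ) = 0 := by
  have key : ∀ t ∈ Set.uIcc (0:ℝ) π,
      HasDerivAt (fun θ => Real.sin (θ - x * Real.sin θ))
        ((1 - x * Real.cos t) * Real.cos (t - x * Real.sin t)) t := by
    intro t _
    have h1 : HasDerivAt (fun θ : ℝ => θ - x * Real.sin θ) (1 - x * Real.cos t) t :=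
      (hasDerivAt_id t).sub ((Real.hasDerivAt_sin t).const_mul x)
    have h2 := (Real.hasDerivAt_sin (t - x * Real.sin t)).comp t h1
    refine h2.congr_deriv ?_
    ring
  have := intervalIntegral.integral_eq_sub_of_hasDerivAt key
    ((Continuous.intervalIntegrable (by continuity)) 0 π)
  simpa using this

lemma II' (f : ℝ → ℝ) (hf : Continuous f) : IntervalIntegrable f volume 0 π :=
  hf.intervalIntegrable 0 π

/-! ### Bessel derivative identities -/

lemma besselJ0_hasDerivAt (x : ℝ) :
    HasDerivAt (besselJ 0) (-besselJ 1 x) x := by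
  have h := besselJ_hasDerivAt 0 x
  convert h using 1
  have e1 : ∀ θ ∈ Set.uIcc (0:ℝ) π, Real.sin θ * Real.sin ((0:ℕ) * θ - x * Real.sin θ)
      = Real.cos θ * Real.cos (x * Real.sin θ) - Real.cos ((1:ℕ) * θ - x * Real.sin θ) := by
    intro θ _
    push_cast
    simp only [zero_mul, one_mul, zero_sub, Real.sin_neg, Real.cos_sub]
    ring
  rw [besselJ, intervalIntegral.integral_congr e1, intervalIntegral.integral_sub
      (II' _ (by fun_prop)) (II' _ (by fun_prop)), besselJ_aux1]
  ring

lemma besselJ1_mul_hasDerivAt (x : ℝ) :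
    HasDerivAt (fun t => t * besselJ 1 t) (x * besselJ 0 x) x := by
  have h := (hasDerivAt_id x).mul (besselJ_hasDerivAt 1 x)
  refine h.congr_deriv ?_
  simp only [id_eq, one_mul]
  have e1 : ∀ θ ∈ Set.uIcc (0:ℝ) π, (x * Real.cos ((0:ℕ) * θ - x * Real.sin θ)
        - Real.cos ((1:ℕ) * θ - x * Real.sin θ))
      = x * (Real.sin θ * Real.sin ((1:ℕ) * θ - x * Real.sin θ))
        - (1 - x * Real.cos θ) * Real.cos (θ - x * Real.sin θ) := by
    intro θ _
    push_cast
    simp only [zero_mul, one_mul, zero_sub, Real.cos_neg, Real.cos_sub, Real.sin_sub]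
    linear_combination (-(x * Real.cos (x * Real.sin θ))) * Real.sin_sq_add_cos_sq θ
  have key : x * besselJ 0 x - besselJ 1 x
      = x * ((1 / π) * ∫ θ in (0:ℝ)..π, Real.sin θ * Real.sin ((1:ℕ) * θ - x * Real.sin θ)) := by
    rw [besselJ, besselJ]
    have step : x * ((1/π) * ∫ θ in (0:ℝ)..π, Real.cos ((0:ℕ) * θ - x * Real.sin θ))
          - (1/π) * ∫ θ in (0:ℝ)..π, Real.cos ((1:ℕ) * θ - x * Real.sin θ)
        = (1/π) * ∫ θ in (0:ℝ)..π, (x * Real.cos ((0:ℕ) * θ - x * Real.sin θ)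
            - Real.cos ((1:ℕ) * θ - x * Real.sin θ)) := by
      rw [intervalIntegral.integral_sub ((II' _ (by fun_prop)).const_mul x) (II' _ (by fun_prop)),
        intervalIntegral.integral_const_mul]
      ring
    rw [step, intervalIntegral.integral_congr e1, intervalIntegral.integral_sub
        ((II' _ (by fun_prop)).const_mul x) (II' _ (by fun_prop)),
      besselJ_aux2, intervalIntegral.integral_const_mul]
    ring
  linarith [key]

/-! ### 1-dimensional Bessel integrals -/

lemma besselJ0_zero : besselJ 0 0 = 1 := by
  simp [besselJ]

lemma int_tJ0 (b : ℝ) : ∫ t in (0:ℝ)..b, t * besselJ 0 t = b * besselJ 1 b := by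
  have := intervalIntegral.integral_eq_sub_of_hasDerivAt
    (f := fun t => t * besselJ 1 t) (fun t _ => besselJ1_mul_hasDerivAt t)
    ((Continuous.intervalIntegrable (by exact continuous_id.mul (besselJ_continuous 0))) 0 b)
  simpa using this

lemma int_tdiff (b : ℝ) :
    ∫ t in (0:ℝ)..b, t * ((besselJ 0 t)^2 - (besselJ 1 t)^2)
      = b * besselJ 0 b * besselJ 1 b := by
  have key : ∀ t ∈ Set.uIcc (0:ℝ) b, HasDerivAt (fun t => (t * besselJ 1 t) * besselJ 0 t)
      (t * ((besselJ 0 t)^2 - (besselJ 1 t)^2)) t := by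
    intro t _
    have := (besselJ1_mul_hasDerivAt t).mul (besselJ0_hasDerivAt t)
    refine this.congr_deriv ?_
    ring
  have := intervalIntegral.integral_eq_sub_of_hasDerivAt key
    ((Continuous.intervalIntegrable (by
      exact continuous_id.mul ((besselJ_continuous 0).pow 2 |>.sub
        ((besselJ_continuous 1).pow 2)))) 0 b)
  simp at this
  rw [this]
  ring

lemma int_tJ0_sq_pos (b : ℝ) (hb : 0 < b) :
    0 < ∫ t in (0:ℝ)..b, t * (besselJ 0 t)^2 := by
  have hcont : ContinuousAt (besselJ 0) 0 := (besselJ_continuous 0).continuousAt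
  have hev : ∀ᶠ y in nhds (0:ℝ), 1/2 < besselJ 0 y := by
    have h1 : (1/2 : ℝ) < besselJ 0 0 := by rw [besselJ0_zero]; norm_num
    exact hcont.eventually_const_lt h1
  rw [Metric.eventually_nhds_iff] at hev
  obtain ⟨ε, hε, hball⟩ := hev
  set c : ℝ := min (ε/2) b with hc
  have hc0 : 0 < c := lt_min (by linarith) hb
  have hcb : c ≤ b := min_le_right _ _
  have hint1 : IntervalIntegrable (fun t => t * (besselJ 0 t)^2) volume 0 c :=
    (Continuous.intervalIntegrable (continuous_id.mul ((besselJ_continuous 0).pow 2))) 0 c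
  have hint2 : IntervalIntegrable (fun t => t * (besselJ 0 t)^2) volume c b :=
    (Continuous.intervalIntegrable (continuous_id.mul ((besselJ_continuous 0).pow 2))) c b
  rw [← intervalIntegral.integral_add_adjacent_intervals hint1 hint2]
  have h2 : (0:ℝ) < ∫ t in (0:ℝ)..c, t * (besselJ 0 t)^2 := by
    have hmono : ∫ t in (0:ℝ)..c, t * (1/4 : ℝ) ≤ ∫ t in (0:ℝ)..c, t * (besselJ 0 t)^2 := by
      apply intervalIntegral.integral_mono_on hc0.le
        ((Continuous.intervalIntegrable (by fun_prop)) 0 c) hint1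
      intro t ht
      have hdist : dist t 0 < ε := by
        rw [Real.dist_eq, sub_zero, abs_of_nonneg ht.1]
        have := ht.2
        have : t ≤ ε/2 := le_trans this (min_le_left _ _)
        linarith
      have hJ := hball hdist
      have : (1/2:ℝ)^2 ≤ (besselJ 0 t)^2 := by
        nlinarith
      nlinarith [ht.1]
    have hval : ∫ t in (0:ℝ)..c, t * (1/4:ℝ) = c^2/8 := by
      rw [intervalIntegral.integral_mul_const, integral_id]
      ring
    nlinarith [hmono, sq_nonneg c, hc0]
  have h3 : (0:ℝ) ≤ ∫ t in c..b, t * (besselJ 0 t)^2 := by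
    apply intervalIntegral.integral_nonneg hcb
    intro u hu
    have : 0 ≤ u := le_trans hc0.le hu.1
    positivity
  linarith

lemma int_tJ1_sq_eq (b : ℝ) (hb : besselJ 0 b * besselJ 1 b = 0) :
    ∫ t in (0:ℝ)..b, t * (besselJ 1 t)^2 = ∫ t in (0:ℝ)..b, t * (besselJ 0 t)^2 := by
  have h0 := int_tdiff b
  rw [show b * besselJ 0 b * besselJ 1 b = 0 by rw [mul_assoc, hb, mul_zero]] at h0
  have hsplit : ∫ t in (0:ℝ)..b, t * ((besselJ 0 t)^2 - (besselJ 1 t)^2)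
      = (∫ t in (0:ℝ)..b, t * (besselJ 0 t)^2) - ∫ t in (0:ℝ)..b, t * (besselJ 1 t)^2 := by
    have i0 : IntervalIntegrable (fun t => t * (besselJ 0 t)^2) volume 0 b :=
      (Continuous.intervalIntegrable (by exact continuous_id.mul ((besselJ_continuous 0).pow 2))) 0 b
    have i1 : IntervalIntegrable (fun t => t * (besselJ 1 t)^2) volume 0 b :=
      (Continuous.intervalIntegrable (by exact continuous_id.mul ((besselJ_continuous 1).pow 2))) 0 b
    rw [← intervalIntegral.integral_sub i0 i1]
    exact intervalIntegral.integral_congr fun t _ => by ring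
  rw [hsplit] at h0
  linarith

/-! ### Geometry of the triangle -/

lemma pt_apply0 (a b : ℝ) : pt a b 0 = a := rfl
lemma pt_apply1 (a b : ℝ) : pt a b 1 = b := rfl

lemma Tri_eq (α l : ℝ) (h k : ℝ) (hh : h = l * Real.cos (α/2)) (hk : k = l * Real.sin (α/2))
    (hhpos : 0 < h) (hkpos : 0 < k) :
    Tri α l = {z : E2 | 0 ≤ z 0 ∧ z 0 ≤ h ∧ |z 1| ≤ (k/h) * z 0} := by
  have hP0 : pt 0 0 ∈ ({pt 0 0, pt h k, pt h (-k)} : Set E2) := by simp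
  have hP1 : pt h k ∈ ({pt 0 0, pt h k, pt h (-k)} : Set E2) := by simp
  have hP2 : pt h (-k) ∈ ({pt 0 0, pt h k, pt h (-k)} : Set E2) := by simp
  rw [Tri, ← hh, ← hk]
  apply Set.Subset.antisymm
  · apply convexHull_min
    · rintro z hz
      simp only [Set.mem_insert_iff, Set.mem_singleton_iff] at hz
      rcases hz with rfl | rfl | rfl
      · refine ⟨le_refl _, hhpos.le, ?_⟩
        simp [pt_apply0, pt_apply1]
      · refine ⟨hhpos.le, le_refl _, ?_⟩
        rw [pt_apply0, pt_apply1, abs_of_pos hkpos, div_mul_cancel₀ _ hhpos.ne']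
      · refine ⟨hhpos.le, le_refl _, ?_⟩
        rw [pt_apply0, pt_apply1, abs_neg, abs_of_pos hkpos, div_mul_cancel₀ _ hhpos.ne']
    · rintro z ⟨hz0, hz1, hz2⟩ w ⟨hw0, hw1, hw2⟩ a b ha hb hab
      have e0 : (a • z + b • w) 0 = a * z 0 + b * w 0 := by
        simp [PiLp.add_apply, PiLp.smul_apply]
      have e1 : (a • z + b • w) 1 = a * z 1 + b * w 1 := by
        simp [PiLp.add_apply, PiLp.smul_apply]
      refine ⟨by rw [e0]; positivity, ?_, ?_⟩
      · rw [e0]; nlinarith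
      · rw [e0, e1]
        calc |a * z 1 + b * w 1| ≤ |a * z 1| + |b * w 1| := abs_add_le _ _
          _ = a * |z 1| + b * |w 1| := by
              rw [abs_mul, abs_mul, abs_of_nonneg ha, abs_of_nonneg hb]
          _ ≤ k/h * (a * z 0 + b * w 0) := by nlinarith
  · rintro z ⟨hz0, hz1, hz2⟩
    have hz2' : -(k/h * z 0) ≤ z 1 ∧ z 1 ≤ k/h * z 0 := abs_le.1 hz2
    have hm1 : -(k * z 0) ≤ h * z 1 := by
      have := mul_le_mul_of_nonneg_right hz2'.1 hhpos.le
      have e : k / h * z 0 * h = k * z 0 := by field_simp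
      nlinarith [this]
    have hm2 : h * z 1 ≤ k * z 0 := by
      have := mul_le_mul_of_nonneg_right hz2'.2 hhpos.le
      have e : k / h * z 0 * h = k * z 0 := by field_simp
      nlinarith [this]
    set a : ℝ := 1 - z 0 / h with hadef
    set b : ℝ := (z 0 / h + z 1 / k) / 2 with hbdef
    set c : ℝ := (z 0 / h - z 1 / k) / 2 with hcdef
    have ha : 0 ≤ a := by
      rw [hadef]
      have : z 0 / h ≤ 1 := by rw [div_le_one hhpos]; exact hz1
      linarith
    have hb : 0 ≤ b := by
      rw [hbdef]
      have : 0 ≤ z 0 / h + z 1 / k := by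
        rw [div_add_div _ _ hhpos.ne' hkpos.ne']
        apply div_nonneg (by nlinarith) (by positivity)
      linarith
    have hc : 0 ≤ c := by
      rw [hcdef]
      have : 0 ≤ z 0 / h - z 1 / k := by
        rw [div_sub_div _ _ hhpos.ne' hkpos.ne']
        apply div_nonneg (by nlinarith) (by positivity)
      linarith
    have hconv : Convex ℝ (convexHull ℝ ({pt 0 0, pt h k, pt h (-k)} : Set E2)) :=
      convex_convexHull ℝ _
    have hmem := hconv.sum_mem (t := Finset.univ) (w := ![a, b, c])
      (z := ![pt 0 0, pt h k, pt h (-k)])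
      (by intro i _; fin_cases i <;> simp only [Matrix.cons_val_zero, Matrix.cons_val_one,
        Matrix.head_cons, Matrix.cons_val_two, Matrix.tail_cons] <;>
        first | exact ha | exact hb | exact hc)
      (by rw [Fin.sum_univ_three]; simp [hadef, hbdef, hcdef]; ring)
      (by intro i _; fin_cases i <;> simp only [Matrix.cons_val_zero, Matrix.cons_val_one,
        Matrix.head_cons] <;>
        [exact subset_convexHull ℝ _ hP0; exact subset_convexHull ℝ _ hP1;
         exact subset_convexHull ℝ _ hP2])
    rw [Fin.sum_univ_three] at hmem
    simp only [Matrix.cons_val_zero, Matrix.cons_val_one, Matrix.head_cons,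
      Matrix.cons_val_two, Matrix.tail_cons] at hmem
    have hzeq : z = a • pt 0 0 + b • pt h k + c • pt h (-k) := by
      ext i
      fin_cases i
      · show z 0 = (a • pt 0 0 + b • pt h k + c • pt h (-k)) 0
        simp only [PiLp.add_apply, PiLp.smul_apply, pt_apply0, smul_eq_mul]
        simp only [hbdef, hcdef]
        field_simp
        ring
      · show z 1 = (a • pt 0 0 + b • pt h k + c • pt h (-k)) 1
        simp only [PiLp.add_apply, PiLp.smul_apply, pt_apply1, smul_eq_mul]
        simp only [hbdef, hcdef]
        field_simp
        ring
    rw [hzeq]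
    exact hmem

/-! ### Reduction of planar integrals to 1-dimensional ones -/

/-- The measurable equiv from E2 to ℝ × ℝ. -/
def phiE2 : E2 ≃ᵐ ℝ × ℝ :=
  (MeasurableEquiv.toLp 2 (Fin 2 → ℝ)).symm.trans (MeasurableEquiv.finTwoArrow)

lemma phiE2_mp : MeasurePreserving phiE2 :=
  (volume_preserving_finTwoArrow ℝ).comp
    (EuclideanSpace.volume_preserving_symm_measurableEquiv_toLp (Fin 2))

/-- Integral of a function of the first coordinate over a triangular region. -/
lemma slab_integral (hgt : ℝ) (m : ℝ) (hhpos : 0 < hgt) (hm : 0 < m) (F : ℝ → ℝ)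
    (hF : Continuous F) :
    ∫ z in {z : E2 | 0 ≤ z 0 ∧ z 0 ≤ hgt ∧ |z 1| ≤ m * z 0}, F (z 0)
      = ∫ x in (0:ℝ)..hgt, F x * (2 * m * x) := by
  set S' : Set (ℝ × ℝ) := {p : ℝ × ℝ | 0 ≤ p.1 ∧ p.1 ≤ hgt ∧ |p.2| ≤ m * p.1} with hS'
  have hpre : {z : E2 | 0 ≤ z 0 ∧ z 0 ≤ hgt ∧ |z 1| ≤ m * z 0} = phiE2 ⁻¹' S' := rfl
  have hS'closed : IsClosed S' := by
    apply IsClosed.inter (isClosed_le continuous_const continuous_fst)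
    exact IsClosed.inter (isClosed_le continuous_fst continuous_const)
      (isClosed_le continuous_snd.abs (continuous_const.mul continuous_fst))
  have hS'meas : MeasurableSet S' := hS'closed.measurableSet
  have step1 : ∫ z in phiE2 ⁻¹' S', F (z 0) = ∫ p in S', F p.1 := by
    have := phiE2_mp.setIntegral_preimage_emb phiE2.measurableEmbedding
      (fun p : ℝ × ℝ => F p.1) S'
    exact this
  rw [hpre, step1]
  have hS'sub : S' ⊆ Set.Icc 0 hgt ×ˢ Set.Icc (-(m*hgt)) (m*hgt) := by
    rintro ⟨x, y⟩ ⟨h1, h2, h3⟩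
    have : |y| ≤ m * hgt := le_trans h3 (by nlinarith)
    exact ⟨⟨h1, h2⟩, abs_le.1 this⟩
  have hS'cpt : IsCompact S' :=
    (isCompact_Icc.prod isCompact_Icc).of_isClosed_subset hS'closed hS'sub
  have hintOn : IntegrableOn (fun p : ℝ × ℝ => F p.1) S' :=
    ((hF.comp continuous_fst).continuousOn).integrableOn_compact hS'cpt
  have hind : Integrable (S'.indicator (fun p : ℝ × ℝ => F p.1)) :=
    hintOn.integrable_indicator hS'meas
  rw [← integral_indicator hS'meas]
  rw [show (volume : Measure (ℝ × ℝ)) = volume.prod volume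
    from Measure.volume_eq_prod ℝ ℝ] at hind ⊢
  rw [integral_prod _ hind]
  have inner_eq : ∀ x : ℝ, (∫ y : ℝ, S'.indicator (fun p : ℝ × ℝ => F p.1) (x, y))
      = (Set.Icc (0:ℝ) hgt).indicator (fun x => F x * (2 * m * x)) x := by
    intro x
    by_cases hx : x ∈ Set.Icc (0:ℝ) hgt
    · have hslice : ∀ y : ℝ, S'.indicator (fun p : ℝ × ℝ => F p.1) (x, y)
          = (Set.Icc (-(m*x)) (m*x)).indicator (fun _ => F x) y := by
        intro y
        by_cases hy : |y| ≤ m * x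
        · rw [Set.indicator_of_mem, Set.indicator_of_mem]
          · exact abs_le.1 hy
          · exact ⟨hx.1, hx.2, hy⟩
        · rw [Set.indicator_of_notMem, Set.indicator_of_notMem]
          · intro hmem; exact hy (abs_le.2 hmem)
          · intro hmem; exact hy hmem.2.2
      simp_rw [hslice]
      rw [integral_indicator_const _ measurableSet_Icc, Set.indicator_of_mem hx]
      rw [Real.volume_real_Icc]
      have : m * x - -(m * x) = 2 * m * x := by ring
      rw [this, max_eq_left (by nlinarith [hx.1] : (0:ℝ) ≤ 2 * m * x)]
      simp [mul_comm]
    · have hzero : ∀ y : ℝ, S'.indicator (fun p : ℝ × ℝ => F p.1) (x, y) = 0 := by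
        intro y
        rw [Set.indicator_of_notMem]
        rintro ⟨h1, h2, _⟩
        exact hx ⟨h1, h2⟩
      simp_rw [hzero]
      rw [Set.indicator_of_notMem hx]
      simp
  simp_rw [inner_eq]
  rw [integral_indicator measurableSet_Icc, integral_Icc_eq_integral_Ioc,
    ← intervalIntegral.integral_of_le hhpos.le]

lemma subst_lemma (G : ℝ → ℝ) (c hgt m : ℝ) (hc : c ≠ 0) :
    ∫ x in (0:ℝ)..hgt, G (c*x) * (2*m*x)
      = (2*m/c^2) * ∫ t in (0:ℝ)..(c*hgt), t * G t := by
  have e : ∀ x ∈ Set.uIcc (0:ℝ) hgt,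
      G (c*x) * (2*m*x) = (fun t => (2*m/c) * (t * G t)) (c * x) := by
    intro x _
    field_simp
  rw [intervalIntegral.integral_congr e,
    intervalIntegral.integral_comp_mul_left (f := fun t => (2*m/c) * (t * G t)) hc, mul_zero,
    intervalIntegral.integral_const_mul, smul_eq_mul]
  generalize (∫ t in (0:ℝ)..(c*hgt), t * G t) = I
  field_simp

/-! ### Gradient of the trial function -/

open InnerProductSpace in
lemma grad_w (c : ℝ) (z : E2) :
    gradient (fun z : E2 => besselJ 0 (c * z 0)) z
      = (-besselJ 1 (c * z 0) * c) • (EuclideanSpace.single (0 : Fin 2) (1:ℝ)) := by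
  apply HasGradientAt.gradient
  rw [hasGradientAt_iff_hasFDerivAt]
  set M : E2 →L[ℝ] ℝ := c • (EuclideanSpace.proj (0 : Fin 2)) with hM
  have hg : HasFDerivAt (fun z : E2 => c * z 0) M z := by
    have := M.hasFDerivAt (x := z)
    convert this using 2
    simp [hM]
  have hcomp := (besselJ0_hasDerivAt (c * z 0)).comp_hasFDerivAt z hg
  refine hcomp.congr_fderiv ?_
  ext v
  simp only [ContinuousLinearMap.coe_smul', Pi.smul_apply, smul_eq_mul]
  rw [toDual_apply_apply, real_inner_smul_left, EuclideanSpace.inner_single_left]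
  simp [hM]
  ring

lemma grad_w_norm_sq (c : ℝ) (z : E2) :
    ‖gradient (fun z : E2 => besselJ 0 (c * z 0)) z‖^2
      = c^2 * (besselJ 1 (c * z 0))^2 := by
  rw [grad_w, norm_smul]
  rw [EuclideanSpace.norm_single]
  simp [mul_pow, sq_abs]
  ring

/-! ### Main theorem -/

/-- The trial function `w(x,y) = J₀(j_{1,1}·x/h)`, where `h = l·cos(α/2)` is
the width of the subequilateral triangle `T(α)`, has mean value zero and
Rayleigh quotient exactly `(j_{1,1}/h)²` on `T(α)`. -/
theorem subequilateral_trial_function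
    (α l : ℝ) (hα0 : 0 < α) (hα : α < π/3) (hl : 0 < l)
    (h : ℝ) (hh : h = l * Real.cos (α/2))
    (j11 : ℝ) (hj11 : IsLeast {x : ℝ | 0 < x ∧ besselJ 1 x = 0} j11)
    (w : E2 → ℝ) (hw : w = fun z => besselJ 0 (j11 * z 0 / h)) :
    (∫ z in Tri α l, w z = 0) ∧
    (0 < ∫ z in Tri α l, (w z)^2) ∧
    (∫ z in Tri α l, ‖gradient w z‖^2 = (j11 / h)^2 * ∫ z in Tri α l, (w z)^2) := by
  have hπ : 0 < π := Real.pi_pos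
  have hcos : 0 < Real.cos (α/2) := by
    apply Real.cos_pos_of_mem_Ioo
    constructor <;> [linarith; linarith]
  have hsin : 0 < Real.sin (α/2) := by
    apply Real.sin_pos_of_pos_of_lt_pi <;> linarith
  set k : ℝ := l * Real.sin (α/2) with hkdef
  have hh0 : 0 < h := by rw [hh]; positivity
  have hk0 : 0 < k := by rw [hkdef]; positivity
  have hj0 : 0 < j11 := hj11.1.1
  have hjz : besselJ 1 j11 = 0 := hj11.1.2
  set c : ℝ := j11 / h with hcdef
  have hc0 : 0 < c := by positivity
  set m : ℝ := k / h with hmdef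
  have hm0 : 0 < m := by positivity
  have hch : c * h = j11 := div_mul_cancel₀ _ hh0.ne'
  have hTri : Tri α l = {z : E2 | 0 ≤ z 0 ∧ z 0 ≤ h ∧ |z 1| ≤ m * z 0} :=
    Tri_eq α l h k hh hkdef hh0 hk0
  have hw2 : w = fun z : E2 => besselJ 0 (c * z 0) := by
    rw [hw]
    funext z
    congr 1
    rw [hcdef]
    ring
  -- general reduction for continuous G
  have key : ∀ G : ℝ → ℝ, Continuous G →
      ∫ z in Tri α l, G (c * z 0) = (2*m/c^2) * ∫ t in (0:ℝ)..j11, t * G t := by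
    intro G hG
    rw [hTri, slab_integral h m hh0 hm0 (fun x => G (c * x)) (by fun_prop),
      subst_lemma G c h m hc0.ne', hch]
  have h1 : ∫ z in Tri α l, w z = 0 := by
    rw [hw2]
    have := key (besselJ 0) (besselJ_continuous 0)
    simpa [int_tJ0, hjz] using this
  have h2 : 0 < ∫ z in Tri α l, (w z)^2 := by
    rw [hw2]
    have := key (fun t => (besselJ 0 t)^2) (by exact (besselJ_continuous 0).pow 2)
    simp only at this
    rw [show (∫ z in Tri α l, ((fun z : E2 => besselJ 0 (c * z 0)) z)^2)
        = ∫ z in Tri α l, (fun t => (besselJ 0 t)^2) (c * z 0) from rfl, this]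
    have hpos := int_tJ0_sq_pos j11 hj0
    positivity
  refine ⟨h1, h2, ?_⟩
  rw [hw2]
  have hgrad : ∀ z : E2, ‖gradient (fun z : E2 => besselJ 0 (c * z 0)) z‖^2
      = (fun t => c^2 * (besselJ 1 t)^2) (c * z 0) := fun z => grad_w_norm_sq c z
  rw [show (∫ z in Tri α l, ‖gradient (fun z : E2 => besselJ 0 (c * z 0)) z‖^2)
      = ∫ z in Tri α l, (fun t => c^2 * (besselJ 1 t)^2) (c * z 0) by
    exact integral_congr_ae (Filter.Eventually.of_forall fun z => hgrad z)]
  rw [key (fun t => c^2 * (besselJ 1 t)^2) (by exact continuous_const.mul ((besselJ_continuous 1).pow 2))]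
  rw [show (∫ z in Tri α l, ((fun z : E2 => besselJ 0 (c * z 0)) z)^2)
      = ∫ z in Tri α l, (fun t => (besselJ 0 t)^2) (c * z 0) from rfl,
    key (fun t => (besselJ 0 t)^2) (by exact (besselJ_continuous 0).pow 2)]
  have e1 : ∀ t ∈ Set.uIcc (0:ℝ) j11, t * (c^2 * (besselJ 1 t)^2)
      = c^2 * (t * (besselJ 1 t)^2) := fun t _ => by ring
  rw [intervalIntegral.integral_congr e1, intervalIntegral.integral_const_mul,
    int_tJ1_sq_eq j11 (by rw [hjz, mul_zero])]
  rw [show (j11 / h)^2 = c^2 from rfl]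
  ring
end
end

section
/- Fix l > 0 and α, β ∈ (0, π), and let τ : ℝ² → ℝ² be the diagonal linear map τ(x, y) = (x·cos(β/2)/cos(α/2), y·sin(β/2)/sin(α/2)), which maps T(α) onto T(β). Let w : ℝ² → ℝ be C¹ on a neighborhood of T(β) with ∫_{T(β)} w² dA > 0 and ∫_{T(β)} ‖∇w‖² dA > 0, let G ∈ ℝ, and let μα, μβ ∈ ℝ satisfy μβ = (∫_{T(β)} ‖∇w‖² dA)/(∫_{T(β)} w² dA) and μα ≤ (∫_{T(α)} ‖∇(w∘τ)‖² dA)/(∫_{T(α)} (w∘τ)² dA). Set κ = (∫_{T(β)} (∂w/∂y)² dA)/(∫_{T(β)} ((∂w/∂x)² + (∂w/∂y)²) dA). If either (i) α < β and κ < sin²(α/2) + (sin²(α/2)·cos²(α/2)/(sin²(β/2) − sin²(α/2)))·G, or (ii) α > β and κ > sin²(α/2) + (sin²(α/2)·cos²(α/2)/(sin²(β/2) − sin²(α/2)))·G, then μα < (1 + G)·μβ. -/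
open MeasureTheory Real

noncomputable section

/-- Auxiliary: the diagonal linear map `(x,y) ↦ (c·x, s·y)`. -/
def diagLin (c s : ℝ) : E2 →ₗ[ℝ] E2 where
  toFun z := WithLp.toLp 2 ![c * z 0, s * z 1]
  map_add' x y := by
    ext i; fin_cases i <;> simp [PiLp.add_apply] <;> ring
  map_smul' r x := by
    ext i; fin_cases i <;> simp [PiLp.smul_apply, smul_eq_mul] <;> ring

/-- Auxiliary: `diagLin` as a continuous linear map. -/
def diagCLM (c s : ℝ) : E2 →L[ℝ] E2 := LinearMap.toContinuousLinearMap (diagLin c s)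

lemma diagCLM_e0 (c s : ℝ) : diagCLM c s (pt 1 0) = c • pt 1 0 := by
  ext i; fin_cases i <;> simp [diagCLM, diagLin, pt]

lemma diagCLM_e1 (c s : ℝ) : diagCLM c s (pt 0 1) = s • pt 0 1 := by
  ext i; fin_cases i <;> simp [diagCLM, diagLin, pt]

lemma diagCLM_injOn (c s : ℝ) (hc : c ≠ 0) (hs : s ≠ 0) (S : Set E2) :
    Set.InjOn (diagCLM c s) S := by
  intro x _ y _ h
  ext i
  fin_cases i
  · have := congrArg (fun v : E2 => v 0) h
    simp [diagCLM, diagLin] at this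
    exact this.resolve_right hc
  · have := congrArg (fun v : E2 => v 1) h
    simp [diagCLM, diagLin] at this
    exact this.resolve_right hs

/-- Change of variables for the diagonal map. -/
lemma diag_cov (S : Set E2) (c s : ℝ) (hc : c ≠ 0) (hs : s ≠ 0) (g : E2 → ℝ)
    (hms : MeasurableSet S) :
    ∫ x in (diagCLM c s) '' S, g x
      = |(diagCLM c s).det| * ∫ x in S, g (diagCLM c s x) := by
  rw [integral_image_eq_integral_abs_det_fderiv_smul volume hms
    (fun x _ => (diagCLM c s).hasFDerivAt.hasFDerivWithinAt)
    (diagCLM_injOn c s hc hs S) g]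
  simp only [smul_eq_mul]
  rw [MeasureTheory.integral_const_mul]

/-- The squared norm of the gradient is the sum of the squared partials. -/
lemma norm_gradient_sq (f : E2 → ℝ) (x : E2) :
    ‖gradient f x‖^2 = (fderiv ℝ f x (pt 1 0))^2 + (fderiv ℝ f x (pt 0 1))^2 := by
  have key : ∀ y : E2, fderiv ℝ f x y = inner ℝ (gradient f x) y :=
    fun y => (InnerProductSpace.toDual_symm_apply).symm
  rw [← real_inner_self_eq_norm_sq, key (pt 1 0), key (pt 0 1)]
  simp only [PiLp.inner_apply, RCLike.inner_apply, Fin.sum_univ_two, pt, conj_trivial]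
  simp
  ring

set_option maxHeartbeats 1000000 in
/-- Transplantation lemma for isosceles triangles (Lemma 4 of
Laugesen–Siudeja): comparing an eigenvalue of `T(β)` with a Rayleigh
quotient bound on `T(α)` via the diagonal linear map `τ`. -/
theorem transplantation_lemma
    (l α β : ℝ) (hl : 0 < l) (hα : α ∈ Set.Ioo 0 π) (hβ : β ∈ Set.Ioo 0 π)
    (τ : E2 → E2)
    (hτ : τ = fun p => pt (p 0 * Real.cos (β/2) / Real.cos (α/2))
      (p 1 * Real.sin (β/2) / Real.sin (α/2)))
    (w : E2 → ℝ) (hw : ∃ U : Set E2, IsOpen U ∧ Tri β l ⊆ U ∧ ContDiffOn ℝ 1 w U)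
    (hw2 : 0 < ∫ z in Tri β l, (w z)^2)
    (hwg : 0 < ∫ z in Tri β l, ‖gradient w z‖^2)
    (G μα μβ : ℝ)
    (hμβ : μβ = (∫ z in Tri β l, ‖gradient w z‖^2) / (∫ z in Tri β l, (w z)^2))
    (hμα : μα ≤ (∫ z in Tri α l, ‖gradient (w ∘ τ) z‖^2) /
      (∫ z in Tri α l, (w (τ z))^2))
    (κ : ℝ)
    (hκ : κ = (∫ z in Tri β l, (fderiv ℝ w z (pt 0 1))^2) /
      (∫ z in Tri β l, ((fderiv ℝ w z (pt 1 0))^2 + (fderiv ℝ w z (pt 0 1))^2)))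
    (hcond : (α < β ∧ κ < Real.sin (α/2)^2 +
        (Real.sin (α/2)^2 * Real.cos (α/2)^2 /
          (Real.sin (β/2)^2 - Real.sin (α/2)^2)) * G) ∨
      (β < α ∧ Real.sin (α/2)^2 +
        (Real.sin (α/2)^2 * Real.cos (α/2)^2 /
          (Real.sin (β/2)^2 - Real.sin (α/2)^2)) * G < κ)) :
    μα < (1 + G) * μβ := by
  obtain ⟨U, hU, hTU, hwC⟩ := hw
  obtain ⟨hα0, hαπ⟩ := hα
  obtain ⟨hβ0, hβπ⟩ := hβ
  have hpi := Real.pi_pos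
  have hca : 0 < Real.cos (α/2) := Real.cos_pos_of_mem_Ioo
    ⟨by linarith only [hα0, hpi], by linarith only [hαπ]⟩
  have hsa : 0 < Real.sin (α/2) := Real.sin_pos_of_pos_of_lt_pi
    (by linarith only [hα0]) (by linarith only [hαπ, hpi])
  have hcb : 0 < Real.cos (β/2) := Real.cos_pos_of_mem_Ioo
    ⟨by linarith only [hβ0, hpi], by linarith only [hβπ]⟩
  have hsb : 0 < Real.sin (β/2) := Real.sin_pos_of_pos_of_lt_pi
    (by linarith only [hβ0]) (by linarith only [hβπ, hpi])
  set c : ℝ := Real.cos (β/2) / Real.cos (α/2) with hc_def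
  set s : ℝ := Real.sin (β/2) / Real.sin (α/2) with hs_def
  have hc : 0 < c := div_pos hcb hca
  have hs : 0 < s := div_pos hsb hsa
  -- τ is the diagonal map
  have hτT : τ = ⇑(diagCLM c s) := by
    rw [hτ]; funext p
    ext i
    fin_cases i <;> (simp [pt, diagCLM, diagLin]; ring)
  -- triangles are compact & measurable
  have hcompα : IsCompact (Tri α l) := (Set.toFinite _).isCompact_convexHull (𝕜 := ℝ)
  have hcompβ : IsCompact (Tri β l) := (Set.toFinite _).isCompact_convexHull (𝕜 := ℝ)
  have hmsα : MeasurableSet (Tri α l) := hcompα.measurableSet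
  have hmsβ : MeasurableSet (Tri β l) := hcompβ.measurableSet
  -- image of triangle
  have himg : (diagCLM c s) '' Tri α l = Tri β l := by
    unfold Tri
    rw [show ((diagCLM c s : E2 → E2)) = ⇑(diagLin c s) from rfl,
      LinearMap.image_convexHull]
    congr 1
    simp only [Set.image_insert_eq, Set.image_singleton]
    congr 1
    · ext i; fin_cases i <;> simp [diagLin, pt]
    congr 1
    · ext i; fin_cases i <;> (simp [diagLin, pt, hc_def, hs_def]; field_simp)
    · congr 1
      ext i; fin_cases i <;> (simp [diagLin, pt, hc_def, hs_def]; field_simp)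
  -- partial derivatives
  set Dx : E2 → ℝ := fun z => fderiv ℝ w z (pt 1 0) with hDx_def
  set Dy : E2 → ℝ := fun z => fderiv ℝ w z (pt 0 1) with hDy_def
  -- integrability of the squared partials
  have hfd : ContinuousOn (fderiv ℝ w) U := hwC.continuousOn_fderiv_of_isOpen hU le_rfl
  have hDxc : ContinuousOn Dx U := hfd.clm_apply continuousOn_const
  have hDyc : ContinuousOn Dy U := hfd.clm_apply continuousOn_const
  have hIx : IntegrableOn (fun z => (Dx z)^2) (Tri β l) :=
    ContinuousOn.integrableOn_compact hcompβ (((hDxc.mono hTU).pow 2))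
  have hIy : IntegrableOn (fun z => (Dy z)^2) (Tri β l) :=
    ContinuousOn.integrableOn_compact hcompβ (((hDyc.mono hTU).pow 2))
  set A : ℝ := ∫ z in Tri β l, (Dx z)^2 with hA_def
  set B : ℝ := ∫ z in Tri β l, (Dy z)^2 with hB_def
  set W : ℝ := ∫ z in Tri β l, (w z)^2 with hW_def
  -- total gradient integral over Tri β l
  have hsum : ∫ z in Tri β l, ((Dx z)^2 + (Dy z)^2) = A + B := integral_add hIx hIy
  have hgradβ : ∫ z in Tri β l, ‖gradient w z‖^2 = A + B := by
    rw [show (fun z => ‖gradient w z‖^2) = fun z => (Dx z)^2 + (Dy z)^2 from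
      funext fun z => norm_gradient_sq w z]
    exact hsum
  have hAB : 0 < A + B := by rw [← hgradβ]; exact hwg
  have hκB : B = κ * (A + B) := by
    rw [hκ]
    rw [show (∫ z in Tri β l, ((fderiv ℝ w z (pt 1 0))^2 + (fderiv ℝ w z (pt 0 1))^2))
        = A + B from hsum]
    field_simp
  -- differentiability of w on the image
  have hwdiff : ∀ z ∈ Tri α l, DifferentiableAt ℝ w (diagCLM c s z) := by
    intro z hz
    have hmem : diagCLM c s z ∈ Tri β l := himg ▸ Set.mem_image_of_mem _ hz
    exact (hwC.differentiableOn one_ne_zero).differentiableAt (hU.mem_nhds (hTU hmem))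
  -- determinant factor
  set d : ℝ := |(diagCLM c s).det| with hd_def
  -- change of variables for w²
  have hWα : W = d * ∫ z in Tri α l, (w (τ z))^2 := by
    rw [hτT, hW_def, ← himg]
    exact diag_cov _ c s hc.ne' hs.ne' (fun x => (w x)^2) hmsα
  have hd : 0 < d := by
    by_contra h
    push_neg at h
    have : d = 0 := le_antisymm h (abs_nonneg _)
    rw [hWα, this, zero_mul] at hw2; exact lt_irrefl 0 hw2
  -- pointwise identity for the transplanted gradient
  have hstep1 : ∫ z in Tri α l, ‖gradient (w ∘ τ) z‖^2
      = ∫ z in Tri α l, (c^2 * (Dx (diagCLM c s z))^2 + s^2 * (Dy (diagCLM c s z))^2) := by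
    apply setIntegral_congr_fun hmsα
    intro z hz
    show ‖gradient (w ∘ τ) z‖ ^ 2
      = c ^ 2 * Dx ((diagCLM c s) z) ^ 2 + s ^ 2 * Dy ((diagCLM c s) z) ^ 2
    have hwd := hwdiff z hz
    have hcomp : fderiv ℝ (w ∘ τ) z = (fderiv ℝ w (diagCLM c s z)).comp (diagCLM c s) := by
      rw [hτT, fderiv_comp z hwd (diagCLM c s).differentiableAt, (diagCLM c s).fderiv]
    rw [norm_gradient_sq, hcomp]
    simp only [ContinuousLinearMap.coe_comp', Function.comp_apply, diagCLM_e0, diagCLM_e1,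
      ContinuousLinearMap.map_smul, smul_eq_mul]
    ring
  -- change of variables for the gradient integrand
  have hstep2 : c^2 * A + s^2 * B
      = d * ∫ z in Tri α l, (c^2 * (Dx (diagCLM c s z))^2 + s^2 * (Dy (diagCLM c s z))^2) := by
    have hcov := diag_cov (Tri α l) c s hc.ne' hs.ne'
      (fun z => c^2 * (Dx z)^2 + s^2 * (Dy z)^2) hmsα
    rw [himg] at hcov
    rw [← hcov, integral_add ((hIx.const_mul _)) ((hIy.const_mul _)),
      MeasureTheory.integral_const_mul, MeasureTheory.integral_const_mul]
  set Iw : ℝ := ∫ z in Tri α l, (w (τ z))^2 with hIw_def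
  set Ig : ℝ := ∫ z in Tri α l, ‖gradient (w ∘ τ) z‖^2 with hIg_def
  have hIg : c^2 * A + s^2 * B = d * Ig := by rw [hstep1]; exact hstep2
  have hratio : Ig / Iw = (c^2 * A + s^2 * B) / W := by
    rw [hIg, hWα, mul_div_mul_left _ _ hd.ne']
  -- positivity of W
  have hW : 0 < W := hw2
  -- the key scalar inequality
  have hkey : c^2 * (1 - κ) + s^2 * κ < 1 + G := by
    have hP : 0 < Real.sin (α/2)^2 * Real.cos (α/2)^2 := by positivity
    rw [← mul_lt_mul_iff_of_pos_right hP]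
    have hexp : (c^2 * (1 - κ) + s^2 * κ) * (Real.sin (α/2)^2 * Real.cos (α/2)^2)
        = Real.cos (β/2)^2 * Real.sin (α/2)^2 * (1 - κ)
          + Real.sin (β/2)^2 * Real.cos (α/2)^2 * κ := by
      rw [hc_def, hs_def]; field_simp
    rw [hexp]
    have h3 : κ * (Real.sin (β/2)^2 - Real.sin (α/2)^2)
        < Real.sin (α/2)^2 * (Real.sin (β/2)^2 - Real.sin (α/2)^2)
          + Real.sin (α/2)^2 * Real.cos (α/2)^2 * G := by
      rcases hcond with ⟨hab, hcnd⟩ | ⟨hab, hcnd⟩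
      · have hslt : Real.sin (α/2) < Real.sin (β/2) :=
          Real.sin_lt_sin_of_lt_of_le_pi_div_two (by linarith only [hα0, hpi])
            (by linarith only [hβπ]) (by linarith only [hab])
        have hD : 0 < Real.sin (β/2)^2 - Real.sin (α/2)^2 :=
          sub_pos.mpr (pow_lt_pow_left₀ hslt hsa.le two_ne_zero)
        have h4 := (mul_lt_mul_iff_of_pos_right hD).mpr hcnd
        have h5 : (Real.sin (α/2)^2 + Real.sin (α/2)^2 * Real.cos (α/2)^2 /
              (Real.sin (β/2)^2 - Real.sin (α/2)^2) * G)
              * (Real.sin (β/2)^2 - Real.sin (α/2)^2)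
            = Real.sin (α/2)^2 * (Real.sin (β/2)^2 - Real.sin (α/2)^2)
              + Real.sin (α/2)^2 * Real.cos (α/2)^2 * G := by
          field_simp [hD.ne']
        rw [h5] at h4
        exact h4
      · have hslt : Real.sin (β/2) < Real.sin (α/2) :=
          Real.sin_lt_sin_of_lt_of_le_pi_div_two (by linarith only [hβ0, hpi])
            (by linarith only [hαπ]) (by linarith only [hab])
        have hD : Real.sin (β/2)^2 - Real.sin (α/2)^2 < 0 :=
          sub_neg.mpr (pow_lt_pow_left₀ hslt hsb.le two_ne_zero)
        have h4 := mul_lt_mul_of_neg_right hcnd hD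
        have h5 : (Real.sin (α/2)^2 + Real.sin (α/2)^2 * Real.cos (α/2)^2 /
              (Real.sin (β/2)^2 - Real.sin (α/2)^2) * G)
              * (Real.sin (β/2)^2 - Real.sin (α/2)^2)
            = Real.sin (α/2)^2 * (Real.sin (β/2)^2 - Real.sin (α/2)^2)
              + Real.sin (α/2)^2 * Real.cos (α/2)^2 * G := by
          field_simp [hD.ne]
        rw [h5] at h4
        exact h4
    have hca2 : Real.cos (α/2)^2 = 1 - Real.sin (α/2)^2 := by
      linarith only [Real.sin_sq_add_cos_sq (α/2)]
    have hcb2 : Real.cos (β/2)^2 = 1 - Real.sin (β/2)^2 := by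
      linarith only [Real.sin_sq_add_cos_sq (β/2)]
    have heq : Real.cos (β/2)^2 * Real.sin (α/2)^2 * (1 - κ)
          + Real.sin (β/2)^2 * Real.cos (α/2)^2 * κ
        = (1 + G) * (Real.sin (α/2)^2 * Real.cos (α/2)^2)
          + (κ * (Real.sin (β/2)^2 - Real.sin (α/2)^2)
            - (Real.sin (α/2)^2 * (Real.sin (β/2)^2 - Real.sin (α/2)^2)
              + Real.sin (α/2)^2 * Real.cos (α/2)^2 * G)) := by
      rw [hca2, hcb2]; ring
    linarith only [h3, heq]
  -- numerator comparison
  have hnum : c^2 * A + s^2 * B < (1 + G) * (A + B) := by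
    have hA' : A = (1 - κ) * (A + B) := by linarith only [hκB]
    have hBA : c^2 * A + s^2 * B = (c^2 * (1 - κ) + s^2 * κ) * (A + B) := by
      linear_combination c^2 * hA' + s^2 * hκB
    rw [hBA]
    exact mul_lt_mul_of_pos_right hkey hAB
  have hfin : (c^2 * A + s^2 * B) / W < (1 + G) * μβ := by
    rw [hμβ, hgradβ, show (1 + G) * ((A + B) / W) = ((1 + G) * (A + B)) / W from
      (mul_div_assoc _ _ _).symm]
    exact (div_lt_div_iff_of_pos_right hW).mpr hnum
  calc μα ≤ Ig / Iw := hμα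
    _ = (c^2 * A + s^2 * B) / W := hratio
    _ < (1 + G) * μβ := hfin
end
end

section
/- Fix l > 0 and α, β ∈ (0, π), and let τ : ℝ² → ℝ² be the diagonal linear map τ(x, y) = (x·cos(β/2)/cos(α/2), y·sin(β/2)/sin(α/2)), which maps T(α) onto T(β). Let w : ℝ² → ℝ be C¹ on a neighborhood of T(β) with ∫_{T(β)} w² dA > 0 and ∫_{T(β)} ‖∇w‖² dA > 0, and let μα, μβ ∈ ℝ satisfy μβ = (∫_{T(β)} ‖∇w‖² dA)/(∫_{T(β)} w² dA) and μα ≤ (∫_{T(α)} ‖∇(w∘τ)‖² dA)/(∫_{T(α)} (w∘τ)² dA). If either (i) α < β and ∫_{T(β)} (∂w/∂y)² dA < tan²(α/2)·∫_{T(β)} (∂w/∂x)² dA, or (ii) α > β and ∫_{T(β)} (∂w/∂y)² dA > tan²(α/2)·∫_{T(β)} (∂w/∂x)² dA, then μα < μβ. -/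
open MeasureTheory Real

noncomputable section

/-! ### Auxiliary material -/

/-- The diagonal linear map `(x, y) ↦ (a x, b y)`. -/
def Dmap (a b : ℝ) : E2 →ₗ[ℝ] E2 where
  toFun p := pt (a * p 0) (b * p 1)
  map_add' p q := by ext i; fin_cases i <;> simp [pt] <;> ring
  map_smul' c p := by ext i; fin_cases i <;> simp [pt] <;> ring

/-- `Dmap` as a continuous linear map. -/
def DmapL (a b : ℝ) : E2 →L[ℝ] E2 := (Dmap a b).toContinuousLinearMap

lemma Dmap_det (a b : ℝ) : LinearMap.det (Dmap a b) = a * b := by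
  have : LinearMap.toMatrix (EuclideanSpace.basisFun (Fin 2) ℝ).toBasis
      (EuclideanSpace.basisFun (Fin 2) ℝ).toBasis (Dmap a b) = !![a, 0; 0, b] := by
    ext i j
    fin_cases i <;> fin_cases j <;>
      simp [LinearMap.toMatrix_apply, Dmap, pt, EuclideanSpace.basisFun_apply,
        EuclideanSpace.single_apply]
  rw [← LinearMap.det_toMatrix (EuclideanSpace.basisFun (Fin 2) ℝ).toBasis, this,
    Matrix.det_fin_two_of]
  ring

lemma Dmap_inj (a b : ℝ) (ha : a ≠ 0) (hb : b ≠ 0) : Function.Injective (Dmap a b) := by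
  intro p q h
  have h0 := congrArg (· 0) h
  have h1 := congrArg (· 1) h
  simp [Dmap, pt] at h0 h1
  ext i
  fin_cases i <;> tauto

/-- Change of variables for the diagonal map. -/
lemma cov (a b : ℝ) (ha : a ≠ 0) (hb : b ≠ 0) (s : Set E2) (hs : MeasurableSet s)
    (g : E2 → ℝ) :
    ∫ x in (Dmap a b) '' s, g x = |a * b| * ∫ x in s, g (Dmap a b x) := by
  have h := integral_image_eq_integral_abs_det_fderiv_smul (μ := volume) hs
    (fun x _ => (DmapL a b).hasFDerivWithinAt) ((Dmap_inj a b ha hb).injOn) g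
  have hdet : (DmapL a b).det = a * b := by
    rw [ContinuousLinearMap.det, DmapL, LinearMap.coe_toContinuousLinearMap, Dmap_det]
  have hco : ⇑(DmapL a b) = ⇑(Dmap a b) := LinearMap.coe_toContinuousLinearMap' _
  rw [hco] at h
  rw [h]
  simp_rw [hdet, smul_eq_mul]
  rw [MeasureTheory.integral_const_mul]

lemma norm_sq_E2 (v : E2) : ‖v‖^2 = (v 0)^2 + (v 1)^2 := by
  rw [EuclideanSpace.norm_eq, Real.sq_sqrt (by positivity)]
  simp [Fin.sum_univ_two, sq_abs]

lemma gradient_apply' (f : E2 → ℝ) (x : E2) (i : Fin 2) :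
    gradient f x i = fderiv ℝ f x (EuclideanSpace.single i 1) := by
  have h : @inner ℝ E2 _ ((InnerProductSpace.toDual ℝ E2).symm (fderiv ℝ f x))
      (EuclideanSpace.single i 1) = fderiv ℝ f x (EuclideanSpace.single i 1) :=
    InnerProductSpace.toDual_symm_apply
  rw [EuclideanSpace.inner_single_right] at h
  simpa [gradient] using h

lemma single_zero_eq_pt : EuclideanSpace.single (0 : Fin 2) (1:ℝ) = pt 1 0 := by
  ext i; fin_cases i <;> simp [pt, EuclideanSpace.single_apply]

lemma single_one_eq_pt : EuclideanSpace.single (1 : Fin 2) (1:ℝ) = pt 0 1 := by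
  ext i; fin_cases i <;> simp [pt, EuclideanSpace.single_apply]

lemma Dmap_image_Tri (l α β : ℝ) (hca : Real.cos (α/2) ≠ 0) (hsa : Real.sin (α/2) ≠ 0) :
    ⇑(Dmap (Real.cos (β/2)/Real.cos (α/2)) (Real.sin (β/2)/Real.sin (α/2))) '' Tri α l
      = Tri β l := by
  rw [Tri, Tri, LinearMap.image_convexHull]
  congr 1
  rw [Set.image_insert_eq, Set.image_insert_eq, Set.image_singleton]
  have e0 : Dmap (Real.cos (β/2)/Real.cos (α/2)) (Real.sin (β/2)/Real.sin (α/2)) (pt 0 0)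
      = pt 0 0 := by
    ext i; fin_cases i <;> simp [Dmap, pt]
  have e1 : Dmap (Real.cos (β/2)/Real.cos (α/2)) (Real.sin (β/2)/Real.sin (α/2))
      (pt (l * Real.cos (α/2)) (l * Real.sin (α/2)))
      = pt (l * Real.cos (β/2)) (l * Real.sin (β/2)) := by
    ext i; fin_cases i <;> (simp [Dmap, pt]; field_simp)
  have e2 : Dmap (Real.cos (β/2)/Real.cos (α/2)) (Real.sin (β/2)/Real.sin (α/2))
      (pt (l * Real.cos (α/2)) (-(l * Real.sin (α/2))))
      = pt (l * Real.cos (β/2)) (-(l * Real.sin (β/2))) := by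
    ext i; fin_cases i <;> (simp [Dmap, pt]; field_simp)
  rw [e0, e1, e2]

set_option maxHeartbeats 2000000 in
/-- Simplified transplantation corollary (Corollary 5 of Laugesen–Siudeja):
comparing eigenvalues of `T(α)` and `T(β)` via the diagonal linear map `τ`. -/
theorem transplantation_corollary
    (l α β : ℝ) (hl : 0 < l) (hα : α ∈ Set.Ioo 0 π) (hβ : β ∈ Set.Ioo 0 π)
    (τ : E2 → E2)
    (hτ : τ = fun p => pt (p 0 * Real.cos (β/2) / Real.cos (α/2))
      (p 1 * Real.sin (β/2) / Real.sin (α/2)))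
    (w : E2 → ℝ) (hw : ∃ U : Set E2, IsOpen U ∧ Tri β l ⊆ U ∧ ContDiffOn ℝ 1 w U)
    (hw2 : 0 < ∫ z in Tri β l, (w z)^2)
    (hwg : 0 < ∫ z in Tri β l, ‖gradient w z‖^2)
    (μα μβ : ℝ)
    (hμβ : μβ = (∫ z in Tri β l, ‖gradient w z‖^2) / (∫ z in Tri β l, (w z)^2))
    (hμα : μα ≤ (∫ z in Tri α l, ‖gradient (w ∘ τ) z‖^2) /
      (∫ z in Tri α l, (w (τ z))^2))
    (hcond : (α < β ∧ (∫ z in Tri β l, (fderiv ℝ w z (pt 0 1))^2) <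
        Real.tan (α/2)^2 * ∫ z in Tri β l, (fderiv ℝ w z (pt 1 0))^2) ∨
      (β < α ∧ Real.tan (α/2)^2 * (∫ z in Tri β l, (fderiv ℝ w z (pt 1 0))^2) <
        ∫ z in Tri β l, (fderiv ℝ w z (pt 0 1))^2)) :
    μα < μβ := by
  obtain ⟨U, hU, hTU, hwU⟩ := hw
  obtain ⟨hα0, hαπ⟩ := hα
  obtain ⟨hβ0, hβπ⟩ := hβ
  have hca : 0 < Real.cos (α/2) := Real.cos_pos_of_mem_Ioo ⟨by linarith [Real.pi_pos], by linarith⟩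
  have hsa : 0 < Real.sin (α/2) := Real.sin_pos_of_pos_of_lt_pi (by linarith) (by linarith [Real.pi_pos])
  have hcb : 0 < Real.cos (β/2) := Real.cos_pos_of_mem_Ioo ⟨by linarith [Real.pi_pos], by linarith⟩
  have hsb : 0 < Real.sin (β/2) := Real.sin_pos_of_pos_of_lt_pi (by linarith) (by linarith [Real.pi_pos])
  set ca := Real.cos (α/2)
  set sa := Real.sin (α/2)
  set cb := Real.cos (β/2)
  set sb := Real.sin (β/2)
  set A := cb / ca with hA
  set B := sb / sa with hB
  have hA0 : 0 < A := div_pos hcb hca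
  have hB0 : 0 < B := div_pos hsb hsa
  -- τ is the diagonal linear map
  have hτL : τ = ⇑(Dmap A B) := by
    rw [hτ]; funext p
    show _ = pt (A * p 0) (B * p 1)
    congr 1 <;> (simp only [hA, hB]; ring)
  -- measurability / compactness
  have hfinα : (({pt 0 0, pt (l * ca) (l * sa), pt (l * ca) (-(l * sa))}) : Set E2).Finite :=
    Set.toFinite _
  have hcompα : IsCompact (Tri α l) := hfinα.isCompact_convexHull ℝ
  have hfinβ : (({pt 0 0, pt (l * cb) (l * sb), pt (l * cb) (-(l * sb))}) : Set E2).Finite :=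
    Set.toFinite _
  have hcompβ : IsCompact (Tri β l) := hfinβ.isCompact_convexHull ℝ
  have hmα : MeasurableSet (Tri α l) := hcompα.isClosed.measurableSet
  have hmβ : MeasurableSet (Tri β l) := hcompβ.isClosed.measurableSet
  -- image of the triangle
  have himg : ⇑(Dmap A B) '' Tri α l = Tri β l :=
    Dmap_image_Tri l α β hca.ne' hsa.ne'
  -- differentiability
  have hdiff : ∀ z ∈ Tri β l, DifferentiableAt ℝ w z := fun z hz =>
    (hwU.differentiableOn one_ne_zero).differentiableAt (hU.mem_nhds (hTU hz))
  have hfc : ContinuousOn (fderiv ℝ w) U := hwU.continuousOn_fderiv_of_isOpen hU le_rfl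
  -- abbreviations
  set X := ∫ z in Tri β l, (fderiv ℝ w z (pt 1 0))^2 with hX
  set Y := ∫ z in Tri β l, (fderiv ℝ w z (pt 0 1))^2 with hY
  set W := ∫ z in Tri β l, (w z)^2 with hW
  have hX0 : 0 ≤ X := integral_nonneg fun z => sq_nonneg _
  have hY0 : 0 ≤ Y := integral_nonneg fun z => sq_nonneg _
  -- integrability of the squared partials
  have hiX : IntegrableOn (fun z => (fderiv ℝ w z (pt 1 0))^2) (Tri β l) := by
    apply ContinuousOn.integrableOn_compact hcompβ
    exact (((hfc.mono hTU).clm_apply continuousOn_const).pow 2)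
  have hiY : IntegrableOn (fun z => (fderiv ℝ w z (pt 0 1))^2) (Tri β l) := by
    apply ContinuousOn.integrableOn_compact hcompβ
    exact (((hfc.mono hTU).clm_apply continuousOn_const).pow 2)
  -- the gradient integral splits
  have hptgrad : ∀ f : E2 → ℝ, ∀ z : E2, ‖gradient f z‖^2
      = (fderiv ℝ f z (pt 1 0))^2 + (fderiv ℝ f z (pt 0 1))^2 := by
    intro f z
    rw [norm_sq_E2, gradient_apply', gradient_apply', single_zero_eq_pt, single_one_eq_pt]
  have hG : (∫ z in Tri β l, ‖gradient w z‖^2) = X + Y := by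
    simp_rw [hptgrad w]
    rw [integral_add hiX hiY]
  -- change of variables for the denominator
  have hAB : A * B ≠ 0 := by positivity
  have hcovW : W = (A * B) * ∫ z in Tri α l, (w (τ z))^2 := by
    rw [hW, ← himg, cov A B hA0.ne' hB0.ne' _ hmα, abs_of_pos (by positivity), hτL]
  -- the transplanted gradient, pointwise
  have hgradτ : ∀ z ∈ Tri α l, ‖gradient (w ∘ τ) z‖^2
      = A^2 * (fderiv ℝ w (τ z) (pt 1 0))^2 + B^2 * (fderiv ℝ w (τ z) (pt 0 1))^2 := by
    intro z hz
    have hzmem : τ z ∈ Tri β l := by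
      rw [← himg, hτL]; exact Set.mem_image_of_mem _ hz
    have hd : DifferentiableAt ℝ w (τ z) := hdiff _ hzmem
    have hdτ : DifferentiableAt ℝ (⇑(DmapL A B)) z := (DmapL A B).differentiableAt
    have hco : ⇑(DmapL A B) = ⇑(Dmap A B) := LinearMap.coe_toContinuousLinearMap' _
    have hcomp : fderiv ℝ (w ∘ τ) z = (fderiv ℝ w (τ z)).comp (DmapL A B) := by
      rw [hτL, ← hco]
      rw [fderiv_comp z (by rwa [hco, ← hτL]) hdτ]
      rw [ContinuousLinearMap.fderiv]
    have h10 : (DmapL A B) (pt 1 0) = A • (pt 1 0) := by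
      rw [hco]
      ext i; fin_cases i <;> simp [Dmap, pt]
    have h01 : (DmapL A B) (pt 0 1) = B • (pt 0 1) := by
      rw [hco]
      ext i; fin_cases i <;> simp [Dmap, pt]
    rw [hptgrad, hcomp]
    simp only [ContinuousLinearMap.comp_apply, h10, h01, _root_.map_smul, smul_eq_mul]
    ring
  -- change of variables for the numerator
  have hcovN : (∫ z in Tri β l, (A^2 * (fderiv ℝ w z (pt 1 0))^2
        + B^2 * (fderiv ℝ w z (pt 0 1))^2))
      = (A * B) * ∫ z in Tri α l, ‖gradient (w ∘ τ) z‖^2 := by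
    rw [← himg, cov A B hA0.ne' hB0.ne' _ hmα, abs_of_pos (by positivity)]
    congr 1
    refine setIntegral_congr_fun hmα fun z hz => ?_
    rw [← hτL]
    exact (hgradτ z hz).symm
  have hsplitN : (∫ z in Tri β l, (A^2 * (fderiv ℝ w z (pt 1 0))^2
        + B^2 * (fderiv ℝ w z (pt 0 1))^2)) = A^2 * X + B^2 * Y := by
    rw [integral_add (hiX.const_mul _) (hiY.const_mul _), MeasureTheory.integral_const_mul,
      MeasureTheory.integral_const_mul]
  -- key strict inequality
  have hpyth_a : sa^2 + ca^2 = 1 := Real.sin_sq_add_cos_sq (α/2)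
  have hpyth_b : sb^2 + cb^2 = 1 := Real.sin_sq_add_cos_sq (β/2)
  have htan : Real.tan (α/2) = sa / ca := Real.tan_eq_sin_div_cos (α/2)
  have key : A^2 * X + B^2 * Y < X + Y := by
    have hAX : A^2 * X = (cb^2 * sa^2 * X) / (ca^2 * sa^2) := by
      rw [hA]; field_simp
    have hBY : B^2 * Y = (sb^2 * ca^2 * Y) / (ca^2 * sa^2) := by
      rw [hB]; field_simp
    rw [hAX, hBY, ← add_div, div_lt_iff₀ (by positivity)]
    rcases hcond with ⟨hab, hcnd⟩ | ⟨hab, hcnd⟩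
    · rw [htan] at hcnd
      have hcc : cb < ca :=
        Real.cos_lt_cos_of_nonneg_of_le_pi (x := α/2) (y := β/2) (by linarith)
          (by linarith) (by linarith)
      have h1 : cb^2 < ca^2 := by nlinarith
      have hcnd' : ca^2 * Y < sa^2 * X := by
        have h := mul_lt_mul_of_pos_left hcnd (show (0:ℝ) < ca^2 by positivity)
        have h2 : ca^2 * ((sa/ca)^2 * X) = sa^2 * X := by field_simp
        rw [h2] at h
        exact h
      have hint : 0 < (ca^2 - cb^2) * (sa^2*X - ca^2*Y) :=
        mul_pos (sub_pos.2 h1) (sub_pos.2 hcnd')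
      have heq2 : (X+Y)*(ca^2*sa^2) - (cb^2*sa^2*X + sb^2*ca^2*Y)
          = (ca^2 - cb^2)*(sa^2*X - ca^2*Y) := by
        linear_combination (ca^2*Y) * hpyth_a - (ca^2*Y) * hpyth_b
      linarith
    · rw [htan] at hcnd
      have hcc : ca < cb :=
        Real.cos_lt_cos_of_nonneg_of_le_pi (x := β/2) (y := α/2) (by linarith)
          (by linarith) (by linarith)
      have h1 : ca^2 < cb^2 := by nlinarith
      have hcnd' : sa^2 * X < ca^2 * Y := by
        have h := mul_lt_mul_of_pos_left hcnd (show (0:ℝ) < ca^2 by positivity)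
        have h2 : ca^2 * ((sa/ca)^2 * X) = sa^2 * X := by field_simp
        rw [h2] at h
        exact h
      have hint : 0 < (cb^2 - ca^2) * (ca^2*Y - sa^2*X) :=
        mul_pos (sub_pos.2 h1) (sub_pos.2 hcnd')
      have heq2 : (X+Y)*(ca^2*sa^2) - (cb^2*sa^2*X + sb^2*ca^2*Y)
          = (cb^2 - ca^2)*(ca^2*Y - sa^2*X) := by
        linear_combination (ca^2*Y) * hpyth_a - (ca^2*Y) * hpyth_b
      linarith
  -- assemble
  have hWα : (∫ z in Tri α l, (w (τ z))^2) = W / (A * B) := by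
    rw [hcovW]; field_simp
  have hNα : (∫ z in Tri α l, ‖gradient (w ∘ τ) z‖^2) = (A^2 * X + B^2 * Y) / (A * B) := by
    rw [← hsplitN, hcovN]; field_simp
  have hWpos : 0 < W := hw2
  calc μα ≤ (∫ z in Tri α l, ‖gradient (w ∘ τ) z‖^2) / (∫ z in Tri α l, (w (τ z))^2) := hμα
    _ = (A^2 * X + B^2 * Y) / W := by
        rw [hWα, hNα]
        field_simp
    _ < (X + Y) / W := by gcongr
    _ = μβ := by rw [hμβ, hG]
end
end
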